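/- Let k ≥ 2 and m ≥ 1 be integers and consider the diversification factor η(ρ) = ((k + (k² − k)ρ)^{m/2} − k^{m/2}) / (k^m − k^{m/2}) as a function of ρ on the interval (−1/(k−1), 1). Then: if m = 1, η is strictly concave; if m = 2, η(ρ) = ρ (η is affine); and if m ≥ 3, η is strictly convex. (Convexity of η for deep trees expresses that hierarchical trees keep a high diversification — small η — even for large values of the dependency parameter ρ.) -/

import Mathlib

open Set

lemma rpow_affine_strictConvexOn {s : Set ℝ} (hs : Convex ℝ s) {A B c d p : ℝ}
    (hB : 0 < B) (hd : 0 < d) (hpos : ∀ ρ ∈ s, 0 ≤ A + B * ρ) (hp : 1 < p) :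
    StrictConvexOn ℝ s (fun ρ : ℝ => ((A + B * ρ) ^ p - c) / d) := by
  refine ⟨hs, fun x hx y hy hxy a b ha hb hab => ?_⟩
  have hu : A + B * x ∈ Set.Ici (0:ℝ) := hpos x hx
  have hv : A + B * y ∈ Set.Ici (0:ℝ) := hpos y hy
  have huv : A + B * x ≠ A + B * y := fun h => hxy (by nlinarith)
  have key : (a * (A + B * x) + b * (A + B * y)) ^ p
      < a * (A + B * x) ^ p + b * (A + B * y) ^ p := by
    simpa using (strictConvexOn_rpow hp).2 hu hv huv ha hb hab
  simp only [smul_eq_mul]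
  have hrw : A + B * (a * x + b * y) = a * (A + B * x) + b * (A + B * y) := by linear_combination (-A) * hab
  rw [hrw]
  have h1 : a * (((A + B * x) ^ p - c) / d) + b * (((A + B * y) ^ p - c) / d)
      = (a * (A + B * x) ^ p + b * (A + B * y) ^ p - c) / d := by
    field_simp; linear_combination (-c) * hab
  rw [h1, div_lt_div_iff_of_pos_right hd]
  linarith

lemma rpow_affine_strictConcaveOn {s : Set ℝ} (hs : Convex ℝ s) {A B c d p : ℝ}
    (hB : 0 < B) (hd : 0 < d) (hpos : ∀ ρ ∈ s, 0 ≤ A + B * ρ) (hp0 : 0 < p) (hp : p < 1) :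
    StrictConcaveOn ℝ s (fun ρ : ℝ => ((A + B * ρ) ^ p - c) / d) := by
  refine ⟨hs, fun x hx y hy hxy a b ha hb hab => ?_⟩
  have hu : A + B * x ∈ Set.Ici (0:ℝ) := hpos x hx
  have hv : A + B * y ∈ Set.Ici (0:ℝ) := hpos y hy
  have huv : A + B * x ≠ A + B * y := fun h => hxy (by nlinarith)
  have key : a * (A + B * x) ^ p + b * (A + B * y) ^ p
      < (a * (A + B * x) + b * (A + B * y)) ^ p := by
    simpa using (Real.strictConcaveOn_rpow hp0 hp).2 hu hv huv ha hb hab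
  simp only [smul_eq_mul]
  have hrw : A + B * (a * x + b * y) = a * (A + B * x) + b * (A + B * y) := by linear_combination (-A) * hab
  rw [hrw]
  have h1 : a * (((A + B * x) ^ p - c) / d) + b * (((A + B * y) ^ p - c) / d)
      = (a * (A + B * x) ^ p + b * (A + B * y) ^ p - c) / d := by
    field_simp; linear_combination (-c) * hab
  rw [h1, div_lt_div_iff_of_pos_right hd]
  linarith
theorem eta_concave_affine_convex (k m : ℕ) (hk : 2 ≤ k) (hm : 1 ≤ m) :
    (m = 1 → StrictConcaveOn ℝ (Set.Ioo (-(1 / ((k : ℝ) - 1))) 1)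
      (fun ρ : ℝ =>
        (((k : ℝ) + ((k : ℝ) ^ 2 - (k : ℝ)) * ρ) ^ ((m : ℝ) / 2) - (k : ℝ) ^ ((m : ℝ) / 2)) /
          ((k : ℝ) ^ m - (k : ℝ) ^ ((m : ℝ) / 2)))) ∧
    (m = 2 → ∀ ρ ∈ Set.Ioo (-(1 / ((k : ℝ) - 1))) (1 : ℝ),
        (((k : ℝ) + ((k : ℝ) ^ 2 - (k : ℝ)) * ρ) ^ ((m : ℝ) / 2) - (k : ℝ) ^ ((m : ℝ) / 2)) /
          ((k : ℝ) ^ m - (k : ℝ) ^ ((m : ℝ) / 2)) = ρ) ∧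
    (3 ≤ m → StrictConvexOn ℝ (Set.Ioo (-(1 / ((k : ℝ) - 1))) 1)
      (fun ρ : ℝ =>
        (((k : ℝ) + ((k : ℝ) ^ 2 - (k : ℝ)) * ρ) ^ ((m : ℝ) / 2) - (k : ℝ) ^ ((m : ℝ) / 2)) /
          ((k : ℝ) ^ m - (k : ℝ) ^ ((m : ℝ) / 2)))) := by
  have hk2 : (2:ℝ) ≤ (k:ℝ) := by exact_mod_cast hk
  have hk1 : (1:ℝ) < (k:ℝ) := by linarith
  have hB : (0:ℝ) < (k:ℝ)^2 - k := by nlinarith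
  have hne : ((k:ℝ) - 1) ≠ 0 := by linarith
  have hpos : ∀ ρ ∈ Set.Ioo (-(1 / ((k : ℝ) - 1))) (1:ℝ),
      0 ≤ (k:ℝ) + ((k:ℝ)^2 - k) * ρ := by
    intro ρ hρ
    have h1 : -(1/((k:ℝ)-1)) ≤ ρ := le_of_lt hρ.1
    have h2 : ((k:ℝ)^2-k) * (-(1/((k:ℝ)-1))) ≤ ((k:ℝ)^2-k) * ρ :=
      mul_le_mul_of_nonneg_left h1 hB.le
    have h3 : ((k:ℝ)^2-k) * (-(1/((k:ℝ)-1))) = -k := by field_simp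
    linarith
  have hm1 : (1:ℝ) ≤ (m:ℝ) := by exact_mod_cast hm
  have hd : (0:ℝ) < (k:ℝ)^m - (k:ℝ)^((m:ℝ)/2) := by
    have h : (k:ℝ)^((m:ℝ)/2) < (k:ℝ)^((m:ℝ)) := by
      rw [Real.rpow_lt_rpow_left_iff hk1]; linarith
    rw [Real.rpow_natCast] at h; linarith
  refine ⟨?_, ?_, ?_⟩
  · intro h1; subst h1
    have := rpow_affine_strictConcaveOn (A := (k:ℝ)) (c := (k:ℝ)^(((1:ℕ):ℝ)/2))
      (convex_Ioo _ _) hB hd hpos (p := ((1:ℕ):ℝ)/2) (by norm_num) (by norm_num)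
    simpa using this
  · intro h2 ρ hρ; subst h2
    have he : ((2:ℕ):ℝ)/2 = 1 := by norm_num
    rw [he, Real.rpow_one, Real.rpow_one]
    have hne2 : (k:ℝ)^2 - k ≠ 0 := ne_of_gt hB
    rw [show ((k:ℝ)^(2:ℕ) : ℝ) = (k:ℝ)^2 from rfl]
    field_simp
    ring
  · intro h3
    have hm3 : (3:ℝ) ≤ (m:ℝ) := by exact_mod_cast h3
    exact rpow_affine_strictConvexOn (convex_Ioo _ _) hB hd hpos (by linarith)
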